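/- Let p ≥ 2 and f ≥ 1 be integers, and let y_i (i ∈ ℤ/fℤ) be integers. Then Σ_{i=0}^{f−1} p^{f−1−i} y_i ≡ 0 (mod p^f − 1) if and only if there exist integers a_i (i ∈ ℤ/fℤ) with y_i = p·a_i − a_{i+1} for all i (indices modulo f). -/

import Mathlib

/-- `Σ_{i<f} p^{f−1−i} y_i ≡ 0 (mod p^f − 1)` iff there are integers `a_i`
(indices mod `f`) with `y_i = p·a_i − a_{i+1}` for all `i`. -/
theorem stmt_10 (p f : ℕ) (hp : 2 ≤ p) (hf : 1 ≤ f) (y : ZMod f → ℤ) :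
    (((p : ℤ) ^ f - 1) ∣ ∑ i ∈ Finset.range f, (p : ℤ) ^ (f - 1 - i) * y (i : ZMod f)) ↔
    ∃ a : ZMod f → ℤ, ∀ i : ZMod f, y i = (p : ℤ) * a i - a (i + 1) := by
  haveI : NeZero f := ⟨by omega⟩
  constructor
  · rintro ⟨t, hS⟩
    set b : ℕ → ℤ := fun k => (p : ℤ) ^ k * t -
        ∑ i ∈ Finset.range k, (p : ℤ) ^ (k - 1 - i) * y (i : ZMod f) with hb
    have key : ∀ k, (p:ℤ) * b k - b (k+1) = y (k : ZMod f) := by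
      intro k
      have h2 : (p:ℤ) * ∑ i ∈ Finset.range k, (p : ℤ) ^ (k - 1 - i) * y (i : ZMod f)
          = ∑ i ∈ Finset.range k, (p : ℤ) ^ (k + 1 - 1 - i) * y (i : ZMod f) := by
        rw [Finset.mul_sum]
        refine Finset.sum_congr rfl fun i hi => ?_
        rw [Finset.mem_range] at hi
        rw [← mul_assoc, ← pow_succ']
        congr 2
        omega
      simp only [hb]
      rw [Finset.sum_range_succ, mul_sub, h2]
      have h3 : (p:ℤ)^(k+1-1-k) = 1 := by simp
      rw [h3]
      ring
    have hbf : b f = b 0 := by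
      simp only [hb]
      rw [hS]
      simp
      ring
    refine ⟨fun j => b j.val, fun i => ?_⟩
    have hi : ((i.val : ℕ) : ZMod f) = i := ZMod.natCast_rightInverse i
    have hvlt : i.val < f := ZMod.val_lt i
    have h1 : (i+1).val = (i.val + 1) % f := by
      conv_lhs => rw [← hi]
      rw [show ((i.val : ZMod f) + 1) = (((i.val + 1 : ℕ)) : ZMod f) by push_cast; ring]
      exact ZMod.val_natCast _ _
    have h2 : b ((i+1).val) = b (i.val + 1) := by
      rw [h1]
      rcases Nat.lt_or_ge (i.val + 1) f with h | h
      · rw [Nat.mod_eq_of_lt h]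
      · have : i.val + 1 = f := by omega
        rw [this, Nat.mod_self, ← hbf]
    simp only []
    rw [h2, key, hi]
  · rintro ⟨a, ha⟩
    refine ⟨a 0, ?_⟩
    have hterm : ∀ i ∈ Finset.range f, (p : ℤ) ^ (f - 1 - i) * y (i : ZMod f)
        = (p:ℤ)^(f-i) * a ((i:ℕ) : ZMod f) - (p:ℤ)^(f-(i+1)) * a (((i+1:ℕ)) : ZMod f) := by
      intro i hi
      rw [Finset.mem_range] at hi
      rw [ha]
      have h1 : (p:ℤ)^(f-i) = (p:ℤ)^(f-1-i) * p := by rw [← pow_succ]; congr 1; omega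
      have h2 : f - (i+1) = f-1-i := by omega
      have h3 : (((i+1:ℕ)) : ZMod f) = ((i:ℕ) : ZMod f) + 1 := by push_cast; ring
      rw [h1, h2, h3]; ring
    rw [Finset.sum_congr rfl hterm,
      Finset.sum_range_sub' (fun k => (p:ℤ)^(f-k) * a ((k:ℕ) : ZMod f)) f]
    simp [ZMod.natCast_self]
    ring
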